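/- Let (a_n)_{n≥1} and (b_n)_{n≥1} be real sequences with b_n < 0 < a_n for every n ≥ 1 (signature (−,+)), and let f_n = A_n/B_n denote the convergents of K(a_n/b_n). Let (u_n)_{n≥-1} satisfy u_n = b_n u_{n-1} + a_n u_{n-2} for n ≥ 1, with u_{-1} > 0. Then for every even n ≥ 1, u_n > 0 if and only if f_n > −u_0/u_{-1}, and for every odd n ≥ 1, u_n > 0 if and only if f_n < −u_0/u_{-1}. (In particular, B_n > 0 for even n ≥ 1 and B_n < 0 for odd n ≥ 1, so every convergent f_n with n ≥ 1 is well defined.) -/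
import Mathlib


/-- For a continued fraction `K(a_n/b_n)` with signature `(−,+)`
(`b n < 0 < a n` for all `n ≥ 1`), canonical numerators `A`, denominators `B`, convergents
`f n = A n / B n`, and a solution `u` of the recurrence with `u (-1) > 0`: for even `n ≥ 1`,
`u n > 0 ↔ f n > -u 0 / u (-1)`; for odd `n ≥ 1`, `u n > 0 ↔ f n < -u 0 / u (-1)`.
In particular `B n > 0` for even `n ≥ 1` and `B n < 0` for odd `n ≥ 1`. -/
theorem stmt_2 (a b A B u : ℤ → ℝ)
    (hsig : ∀ n : ℤ, 1 ≤ n → b n < 0 ∧ 0 < a n)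
    (hA1 : A (-1) = 1) (hA0 : A 0 = 0)
    (hArec : ∀ n : ℤ, 1 ≤ n → A n = b n * A (n - 1) + a n * A (n - 2))
    (hB1 : B (-1) = 0) (hB0 : B 0 = 1)
    (hBrec : ∀ n : ℤ, 1 ≤ n → B n = b n * B (n - 1) + a n * B (n - 2))
    (hu : ∀ n : ℤ, 1 ≤ n → u n = b n * u (n - 1) + a n * u (n - 2))
    (hum1 : 0 < u (-1)) :
    (∀ n : ℤ, 1 ≤ n → Even n → 0 < B n) ∧
    (∀ n : ℤ, 1 ≤ n → Odd n → B n < 0) ∧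
    (∀ n : ℤ, 1 ≤ n → Even n → (0 < u n ↔ -(u 0 / u (-1)) < A n / B n)) ∧
    (∀ n : ℤ, 1 ≤ n → Odd n → (0 < u n ↔ A n / B n < -(u 0 / u (-1)))) := by
  -- u n = u(-1) A n + u 0 B n
  have hcomb : ∀ n : ℤ, -1 ≤ n →
      u n = u (-1) * A n + u 0 * B n ∧
      u (n + 1) = u (-1) * A (n + 1) + u 0 * B (n + 1) := by
    refine Int.le_induction ?_ ?_
    · norm_num [hA1, hA0, hB1, hB0]
    · intro n hn ih
      refine ⟨ih.2, ?_⟩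
      have h1 : (1 : ℤ) ≤ n + 1 + 1 := by omega
      have e1 := hu _ h1
      have e2 := hArec _ h1
      have e3 := hBrec _ h1
      have r1 : n + 1 + 1 - 1 = n + 1 := by ring
      have r2 : n + 1 + 1 - 2 = n := by ring
      rw [r1, r2] at e1 e2 e3
      rw [e1, e2, e3, ih.1, ih.2]; ring
  -- sign of B
  have hBsign : ∀ n : ℤ, 0 ≤ n →
      ((Even n → 0 < B n) ∧ (Odd n → B n < 0)) ∧
      ((Even (n + 1) → 0 < B (n + 1)) ∧ (Odd (n + 1) → B (n + 1) < 0)) := by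
    refine Int.le_induction ?_ ?_
    · 
      have hB1' : B 1 = b 1 := by
        have := hBrec 1 le_rfl
        norm_num [hB1, hB0] at this
        exact this
      refine ⟨⟨fun _ => by rw [hB0]; norm_num, fun h => absurd h (by decide)⟩,
        ⟨fun h => absurd h (by decide), fun _ => by norm_num [hB1']; exact (hsig 1 le_rfl).1⟩⟩
    · intro n hn ih
      refine ⟨ih.2, ?_⟩
      have h1 : (1 : ℤ) ≤ n + 1 + 1 := by omega
      have e3 := hBrec _ h1
      have r1 : n + 1 + 1 - 1 = n + 1 := by ring
      have r2 : n + 1 + 1 - 2 = n := by ring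
      rw [r1, r2] at e3
      obtain ⟨hb, ha⟩ := hsig _ h1
      constructor
      · intro he
        have hen : Even n := by
          rcases Int.even_or_odd n with h | h
          · exact h
          · exfalso; rw [Int.even_iff] at he; rw [Int.odd_iff] at h; omega
        have hon : Odd (n + 1) := Even.add_one hen
        have h2 := ih.1.1 hen
        have h3 := ih.2.2 hon
        rw [e3]; nlinarith
      · intro ho
        have hon : Odd n := by
          rcases Int.even_or_odd n with h | h
          · exfalso; rw [Int.odd_iff] at ho; rw [Int.even_iff] at h; omega
          · exact h
        have hen : Even (n + 1) := Odd.add_one hon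
        have h2 := ih.1.2 hon
        have h3 := ih.2.1 hen
        rw [e3]; nlinarith
  have hBpos : ∀ n : ℤ, 1 ≤ n → Even n → 0 < B n := fun n hn he =>
    (hBsign n (by omega)).1.1 he
  have hBneg : ∀ n : ℤ, 1 ≤ n → Odd n → B n < 0 := fun n hn ho =>
    (hBsign n (by omega)).1.2 ho
  have hun : ∀ n : ℤ, 1 ≤ n → u n = u (-1) * A n + u 0 * B n := fun n hn =>
    (hcomb n (by omega)).1
  refine ⟨hBpos, hBneg, ?_, ?_⟩
  · intro n hn he
    have hB := hBpos n hn he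
    rw [hun n hn, ← neg_div, div_lt_div_iff₀ hum1 hB]
    constructor <;> intro h <;> nlinarith
  · intro n hn ho
    have hB := hBneg n hn ho
    have hBne : B n ≠ 0 := ne_of_lt hB
    rw [hun n hn, ← neg_div, ← neg_div_neg_eq (A n) (B n),
      div_lt_div_iff₀ (by linarith) hum1]
    constructor <;> intro h <;> nlinarith
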